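/- Let d ≥ 2 and let P be a tuple of n points in [0,1)^d. If either (d = 2 and n ≥ 4) or (d ≥ 3 and n ≥ 3), then the L∞ star discrepancy satisfies d*(P) ≥ 1/n. -/

import Mathlib

open Finset

noncomputable section

open scoped Classical

/-- Number of points of the tuple `P` lying in the open anchored box `[0,q)`. -/
def openCount {n d : ℕ} (P : Fin n → Fin d → ℝ) (q : Fin d → ℝ) : ℕ :=
  (Finset.univ.filter (fun i : Fin n => ∀ j, P i j < q j)).card

/-- Number of points of the tuple `P` lying in the closed anchored box `[0,q]`. -/
def closedCount {n d : ℕ} (P : Fin n → Fin d → ℝ) (q : Fin d → ℝ) : ℕ :=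
  (Finset.univ.filter (fun i : Fin n => ∀ j, P i j ≤ q j)).card

/-- Open local discrepancy `δ(P,q) = ∏ q_j − #{i : x⁽ⁱ⁾ ∈ [0,q)}/n`. -/
def openDisc {n d : ℕ} (P : Fin n → Fin d → ℝ) (q : Fin d → ℝ) : ℝ :=
  (∏ j, q j) - (openCount P q : ℝ) / n

/-- Closed local discrepancy `δ̄(P,q) = #{i : x⁽ⁱ⁾ ∈ [0,q]}/n − ∏ q_j`. -/
def closedDisc {n d : ℕ} (P : Fin n → Fin d → ℝ) (q : Fin d → ℝ) : ℝ :=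
  (closedCount P q : ℝ) / n - ∏ j, q j

/-- `max(δ(P,q), δ̄(P,q))`. -/
def localDisc {n d : ℕ} (P : Fin n → Fin d → ℝ) (q : Fin d → ℝ) : ℝ :=
  max (openDisc P q) (closedDisc P q)

/-- The L∞ star discrepancy `d*(P) = sup_{q ∈ [0,1]^d} max(δ(P,q), δ̄(P,q))`. -/
def starDisc {n d : ℕ} (P : Fin n → Fin d → ℝ) : ℝ :=
  sSup {r : ℝ | ∃ q : Fin d → ℝ, (∀ j, q j ∈ Set.Icc (0:ℝ) 1) ∧ r = localDisc P q}

/-- Auxiliary arithmetic: from `a/c - b/c < e/c` with `c > 0` deduce `a < b + e`. -/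
private lemma ratio_lt {c a b e : ℝ} (hc : 0 < c) (h : a / c - b / c < e / c) :
    a < b + e := by
  rw [← sub_div, div_lt_div_iff_of_pos_right hc] at h
  have := h
  linarith

/-- The set of indices whose `j`-th coordinate is `< k/n`. -/
def Aset {n d : ℕ} (P : Fin n → Fin d → ℝ) (j : Fin d) (k : ℕ) : Finset (Fin n) :=
  Finset.univ.filter (fun i : Fin n => P i j < (k : ℝ) / n)

/-- The set of indices all of whose coordinates are `< k/n`. -/
def Cset {n d : ℕ} (P : Fin n → Fin d → ℝ) (k : ℕ) : Finset (Fin n) :=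
  Finset.univ.filter (fun i : Fin n => ∀ j, P i j < (k : ℝ) / n)

/-- If the local discrepancy is everywhere `< 1/n`, then for every coordinate `j` and
`k ≤ n`, exactly `k` points have `j`-th coordinate `< k/n`, and the same points are
exactly those with `j`-th coordinate `≤ k/n`. -/
private lemma Aset_key {n d : ℕ} (hn : 0 < n) (P : Fin n → Fin d → ℝ)
    (hP : ∀ i j, P i j ∈ Set.Ico (0:ℝ) 1)
    (hloc : ∀ q : Fin d → ℝ, (∀ j, q j ∈ Set.Icc (0:ℝ) 1) → localDisc P q < 1 / n)
    (j : Fin d) (k : ℕ) (hk : k ≤ n) :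
    (Aset P j k).card = k ∧
      Finset.univ.filter (fun i : Fin n => P i j ≤ (k : ℝ) / n) = Aset P j k := by
  have hnR : (0:ℝ) < (n:ℝ) := by exact_mod_cast hn
  set q : Fin d → ℝ := fun j' => if j' = j then (k : ℝ) / n else 1 with hq
  have hkIcc : (k:ℝ)/(n:ℝ) ∈ Set.Icc (0:ℝ) 1 :=
    ⟨by positivity, by rw [div_le_one hnR]; exact_mod_cast hk⟩
  have hqmem : ∀ j', q j' ∈ Set.Icc (0:ℝ) 1 := by
    intro j'
    rcases eq_or_ne j' j with hj | hj
    · simpa [hq, hj] using hkIcc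
    · simp [hq, hj]
  have hprod : (∏ j', q j') = (k:ℝ)/(n:ℝ) := by
    simp only [hq]
    rw [Finset.prod_ite_eq' Finset.univ j (fun _ => (k:ℝ)/(n:ℝ))]
    simp
  have hoc : openCount P q = (Aset P j k).card := by
    unfold openCount Aset
    congr 1
    apply Finset.filter_congr
    intro i _
    constructor
    · intro hall
      simpa [hq] using hall j
    · intro hi j'
      rcases eq_or_ne j' j with hj | hj
      · subst hj; simpa [hq] using hi
      · simp only [hq, if_neg hj]
        exact (hP i j').2
  have hcc : closedCount P q
      = (Finset.univ.filter (fun i : Fin n => P i j ≤ (k:ℝ)/(n:ℝ))).card := by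
    unfold closedCount
    congr 1
    apply Finset.filter_congr
    intro i _
    constructor
    · intro hall
      simpa [hq] using hall j
    · intro hi j'
      rcases eq_or_ne j' j with hj | hj
      · subst hj; simpa [hq] using hi
      · simp only [hq, if_neg hj]
        exact le_of_lt (hP i j').2
  have hl := hloc q hqmem
  unfold localDisc openDisc closedDisc at hl
  rw [max_lt_iff] at hl
  obtain ⟨hopen, hclose⟩ := hl
  rw [hprod, hoc] at hopen
  rw [hprod, hcc] at hclose
  have h1 : (k:ℝ) < ((Aset P j k).card : ℝ) + 1 := ratio_lt hnR hopen
  have h2 : (((Finset.univ.filter (fun i : Fin n => P i j ≤ (k:ℝ)/(n:ℝ))).card : ℝ))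
      < (k:ℝ) + 1 := ratio_lt hnR hclose
  have hsub : Aset P j k ⊆ Finset.univ.filter (fun i : Fin n => P i j ≤ (k:ℝ)/(n:ℝ)) := by
    intro x hx
    have hx' := (Finset.mem_filter.mp hx).2
    exact Finset.mem_filter.mpr ⟨Finset.mem_univ _, le_of_lt hx'⟩
  have hk1 : k ≤ (Aset P j k).card := by
    have : k < (Aset P j k).card + 1 := by exact_mod_cast h1
    omega
  have hk2 : (Finset.univ.filter (fun i : Fin n => P i j ≤ (k:ℝ)/(n:ℝ))).card ≤ k := by
    have : (Finset.univ.filter (fun i : Fin n => P i j ≤ (k:ℝ)/(n:ℝ))).card < k + 1 := by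
      exact_mod_cast h2
    omega
  have hcard : (Aset P j k).card = k :=
    le_antisymm ((Finset.card_le_card hsub).trans hk2) hk1
  refine ⟨hcard, (Finset.eq_of_subset_of_card_le hsub ?_).symm⟩
  rw [hcard]
  exact hk2

/-- The key chain step: `|C_{k+1}| ≤ |C_k| + 1`. -/
private lemma Cset_step {n d : ℕ} (hn : 0 < n) (P : Fin n → Fin d → ℝ)
    (hP : ∀ i j, P i j ∈ Set.Ico (0:ℝ) 1)
    (hloc : ∀ q : Fin d → ℝ, (∀ j, q j ∈ Set.Icc (0:ℝ) 1) → localDisc P q < 1 / n)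
    (k : ℕ) (hk : k < n) :
    (Cset P (k+1)).card ≤ (Cset P k).card + 1 := by
  have hnR : (0:ℝ) < (n:ℝ) := by exact_mod_cast hn
  have hAk := fun j : Fin d => Aset_key hn P hP hloc j k (le_of_lt hk)
  have hAk1 := fun j : Fin d => Aset_key hn P hP hloc j (k+1) hk
  have hne : ∀ j : Fin d, (Aset P j (k+1)).Nonempty := by
    intro j
    apply Finset.card_pos.mp
    rw [(hAk1 j).1]
    omega
  choose t ht hmax using fun j : Fin d =>
    Finset.exists_max_image (Aset P j (k+1)) (fun i => P i j) (hne j)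
  set q : Fin d → ℝ := fun j => P (t j) j with hqdef
  have hqmem : ∀ j, q j ∈ Set.Icc (0:ℝ) 1 := by
    intro j
    simp only [hqdef]
    exact ⟨(hP (t j) j).1, le_of_lt (hP (t j) j).2⟩
  have hmlt : ∀ j, q j < ((k+1 : ℕ) : ℝ)/(n:ℝ) := by
    intro j
    have := (Finset.mem_filter.mp (ht j)).2
    simpa [hqdef] using this
  have hclosedset :
      Finset.univ.filter (fun i : Fin n => ∀ j, P i j ≤ q j) = Cset P (k+1) := by
    unfold Cset
    apply Finset.filter_congr
    intro i _
    constructor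
    · intro hi j
      exact lt_of_le_of_lt (hi j) (hmlt j)
    · intro hi j
      apply hmax j i
      exact Finset.mem_filter.mpr ⟨Finset.mem_univ _, hi j⟩
  have hmgt : ∀ j, (k:ℝ)/(n:ℝ) < q j := by
    intro j
    have hnsub : ¬ Aset P j (k+1) ⊆ Aset P j k := by
      intro hsub
      have := Finset.card_le_card hsub
      rw [(hAk j).1, (hAk1 j).1] at this
      omega
    obtain ⟨t0, ht0, ht0n⟩ := Finset.not_subset.mp hnsub
    have h2 : ¬ P t0 j ≤ (k:ℝ)/(n:ℝ) := by
      intro hle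
      apply ht0n
      rw [← (hAk j).2]
      exact Finset.mem_filter.mpr ⟨Finset.mem_univ _, hle⟩
    exact lt_of_lt_of_le (lt_of_not_ge h2) (hmax j t0 ht0)
  have hopenset :
      Finset.univ.filter (fun i : Fin n => ∀ j, P i j < q j) ⊆ Cset P k := by
    intro i hi
    have hi' : ∀ j, P i j < q j := (Finset.mem_filter.mp hi).2
    refine Finset.mem_filter.mpr ⟨Finset.mem_univ _, ?_⟩
    intro j
    by_contra hge
    push_neg at hge
    have hiA : i ∈ Aset P j (k+1) :=
      Finset.mem_filter.mpr ⟨Finset.mem_univ _, lt_trans (hi' j) (hmlt j)⟩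
    have hinA : i ∉ Aset P j k := by
      intro hmem
      exact absurd ((Finset.mem_filter.mp hmem).2) (not_lt.mpr hge)
    have htjn : t j ∉ Aset P j k := by
      intro hmem
      have h4 := (Finset.mem_filter.mp hmem).2
      have h5 : q j < (k:ℝ)/(n:ℝ) := by simpa [hqdef] using h4
      exact absurd h5 (not_lt.mpr (le_of_lt (hmgt j)))
    have hsub : Aset P j k ⊆ Aset P j (k+1) := by
      intro x hx
      have hx' := (Finset.mem_filter.mp hx).2
      refine Finset.mem_filter.mpr ⟨Finset.mem_univ _, lt_of_lt_of_le hx' ?_⟩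
      have hkk : (k:ℝ) ≤ ((k+1 : ℕ) : ℝ) := by exact_mod_cast Nat.le_succ k
      exact (div_le_div_iff_of_pos_right hnR).mpr hkk
    have hdiff : (Aset P j (k+1) \ Aset P j k).card = 1 := by
      rw [Finset.card_sdiff_of_subset hsub, (hAk j).1, (hAk1 j).1]
      omega
    have hi2 : i ∈ Aset P j (k+1) \ Aset P j k := Finset.mem_sdiff.mpr ⟨hiA, hinA⟩
    have ht2 : t j ∈ Aset P j (k+1) \ Aset P j k := Finset.mem_sdiff.mpr ⟨ht j, htjn⟩
    obtain ⟨x, hx⟩ := Finset.card_eq_one.mp hdiff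
    rw [hx, Finset.mem_singleton] at hi2 ht2
    have h5 : P i j < P (t j) j := by simpa [hqdef] using hi' j
    rw [ht2, hi2] at h5
    exact lt_irrefl _ h5
  have hl := hloc q hqmem
  unfold localDisc openDisc closedDisc at hl
  rw [max_lt_iff] at hl
  obtain ⟨ho, hc⟩ := hl
  have e1 : closedCount P q = (Cset P (k+1)).card := by
    unfold closedCount
    rw [hclosedset]
  have e2 : (openCount P q : ℝ) ≤ ((Cset P k).card : ℝ) := by
    exact_mod_cast Finset.card_le_card hopenset
  have h7 : ((Cset P (k+1)).card : ℝ)/(n:ℝ) - ((Cset P k).card : ℝ)/(n:ℝ) < 2/(n:ℝ) := by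
    rw [← e1]
    have d1 : (openCount P q : ℝ)/(n:ℝ) ≤ ((Cset P k).card : ℝ)/(n:ℝ) :=
      (div_le_div_iff_of_pos_right hnR).mpr e2
    have h8 : (2:ℝ)/(n:ℝ) = 1/(n:ℝ) + 1/(n:ℝ) := by ring
    linarith
  have h9 := ratio_lt hnR h7
  have h10 : (Cset P (k+1)).card < (Cset P k).card + 2 := by exact_mod_cast h9
  omega

/-- If `d = 2` and `n ≥ 4`, or `d ≥ 3` and `n ≥ 3`, then any tuple of `n`
points in `[0,1)^d` has L∞ star discrepancy at least `1/n`. -/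
theorem stmt_0 {d n : ℕ} (hd : 2 ≤ d) (P : Fin n → Fin d → ℝ)
    (hP : ∀ i j, P i j ∈ Set.Ico (0:ℝ) 1)
    (h : (d = 2 ∧ 4 ≤ n) ∨ (3 ≤ d ∧ 3 ≤ n)) :
    1 / (n : ℝ) ≤ starDisc P := by
  by_contra hcon
  push_neg at hcon
  have hn : 0 < n := by rcases h with ⟨_, h4⟩ | ⟨_, h3⟩ <;> omega
  have hn3 : 3 ≤ n := by rcases h with ⟨_, h44⟩ | ⟨_, h33⟩ <;> omega
  have hnR : (0:ℝ) < (n:ℝ) := by exact_mod_cast hn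
  have hbdd : BddAbove {r : ℝ | ∃ q : Fin d → ℝ,
      (∀ j, q j ∈ Set.Icc (0:ℝ) 1) ∧ r = localDisc P q} := by
    refine ⟨1, ?_⟩
    rintro r ⟨q, hq, rfl⟩
    unfold localDisc openDisc closedDisc
    apply max_le
    · have h1 : (∏ j, q j) ≤ 1 :=
        Finset.prod_le_one (fun j _ => (hq j).1) (fun j _ => (hq j).2)
      have h2 : (0:ℝ) ≤ (openCount P q : ℝ)/(n:ℝ) := by positivity
      linarith
    · have h1 : (0:ℝ) ≤ ∏ j, q j := Finset.prod_nonneg (fun j _ => (hq j).1)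
      have h2 : (closedCount P q : ℝ)/(n:ℝ) ≤ 1 := by
        rw [div_le_one hnR]
        have h3 : closedCount P q ≤ n := by
          unfold closedCount
          calc (Finset.univ.filter (fun i : Fin n => ∀ j, P i j ≤ q j)).card
              ≤ Finset.univ.card := Finset.card_filter_le _ _
            _ = n := by rw [Finset.card_univ, Fintype.card_fin]
        exact_mod_cast h3
      linarith
  have hloc : ∀ q : Fin d → ℝ, (∀ j, q j ∈ Set.Icc (0:ℝ) 1) → localDisc P q < 1 / n := by
    intro q hq
    calc localDisc P q ≤ starDisc P := le_csSup hbdd ⟨q, hq, rfl⟩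
      _ < 1 / n := hcon
  -- |C_n| = n
  have hCn : (Cset P n).card = n := by
    have hCnu : Cset P n = Finset.univ := by
      unfold Cset
      apply Finset.filter_true_of_mem
      intro i _ j
      rw [div_self (ne_of_gt hnR)]
      exact (hP i j).2
    rw [hCnu, Finset.card_univ, Fintype.card_fin]
  -- chain: |C_{n-i}| ≥ n - i
  have hchain : ∀ i : ℕ, i ≤ n → (n - i : ℕ) ≤ (Cset P (n - i)).card := by
    intro i
    induction i with
    | zero =>
      intro _
      simp only [Nat.sub_zero]
      rw [hCn]
    | succ m ih =>
      intro hm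
      have h1 := Cset_step hn P hP hloc (n - (m+1)) (by omega)
      have h2 : n - (m+1) + 1 = n - m := by omega
      rw [h2] at h1
      have h3 := ih (by omega)
      omega
  have hC2 : 2 ≤ (Cset P 2).card := by
    have h1 := hchain (n - 2) (by omega)
    have h2 : n - (n - 2) = 2 := by omega
    rw [h2] at h1
    exact h1
  obtain ⟨a, ha, b, hb, hab⟩ := Finset.one_lt_card.mp (by omega : 1 < (Cset P 2).card)
  have ha' : ∀ j, P a j < 2/(n:ℝ) := by
    intro j
    have := (Finset.mem_filter.mp ha).2 j
    exact_mod_cast this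
  have hb' : ∀ j, P b j < 2/(n:ℝ) := by
    intro j
    have := (Finset.mem_filter.mp hb).2 j
    exact_mod_cast this
  set q : Fin d → ℝ := fun j => max (P a j) (P b j) with hqdef
  have hqmem : ∀ j, q j ∈ Set.Icc (0:ℝ) 1 := by
    intro j
    simp only [hqdef]
    exact ⟨le_max_of_le_left (hP a j).1,
      max_le (le_of_lt (hP a j).2) (le_of_lt (hP b j).2)⟩
  have hql : ∀ j, q j ≤ 2/(n:ℝ) := by
    intro j
    simp only [hqdef]
    exact max_le (le_of_lt (ha' j)) (le_of_lt (hb' j))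
  have hprodle : (∏ j, q j) ≤ (2/(n:ℝ))^d := by
    calc (∏ j, q j) ≤ ∏ _j : Fin d, 2/(n:ℝ) :=
        Finset.prod_le_prod (fun j _ => (hqmem j).1) (fun j _ => hql j)
      _ = (2/(n:ℝ))^d := by rw [Finset.prod_const, Finset.card_univ, Fintype.card_fin]
  have hnat : 2^d * n ≤ n^d := by
    rcases h with ⟨hd2, hn4⟩ | ⟨hd3, hn3'⟩
    · subst hd2
      have he : (2:ℕ)^2 * n = 4 * n := by norm_num
      rw [he]
      calc 4 * n ≤ n * n := Nat.mul_le_mul_right n hn4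
        _ = n^2 := (pow_two n).symm
    · obtain ⟨m, rfl⟩ : ∃ m, d = m + 3 := ⟨d - 3, by omega⟩
      have h1 : (2:ℕ)^m ≤ 3^m := Nat.pow_le_pow_left (by norm_num) m
      have h2 : (2:ℕ)^(m+3) ≤ 3^(m+2) := by
        have e1 : (2:ℕ)^(m+3) = 8 * 2^m := by ring
        have e2 : (3:ℕ)^(m+2) = 9 * 3^m := by ring
        rw [e1, e2]
        calc 8 * 2^m ≤ 8 * 3^m := Nat.mul_le_mul_left 8 h1
          _ ≤ 9 * 3^m := Nat.mul_le_mul_right _ (by norm_num)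
      have h4 : (3:ℕ)^(m+2) ≤ n^(m+2) := Nat.pow_le_pow_left hn3' _
      calc 2^(m+3) * n ≤ n^(m+2) * n := Nat.mul_le_mul_right n (h2.trans h4)
        _ = n^(m+3) := by ring
  have hpow : (2/(n:ℝ))^d ≤ 1/(n:ℝ) := by
    rw [div_pow, div_le_div_iff₀ (by positivity) hnR, one_mul]
    exact_mod_cast hnat
  have hcc : (2:ℝ) ≤ (closedCount P q : ℝ) := by
    have hsub : ({a, b} : Finset (Fin n))
        ⊆ Finset.univ.filter (fun i : Fin n => ∀ j, P i j ≤ q j) := by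
      intro x hx
      rcases Finset.mem_insert.mp hx with rfl | hx
      · refine Finset.mem_filter.mpr ⟨Finset.mem_univ _, ?_⟩
        intro j
        simp only [hqdef]
        exact le_max_left _ _
      · rw [Finset.mem_singleton] at hx
        subst hx
        refine Finset.mem_filter.mpr ⟨Finset.mem_univ _, ?_⟩
        intro j
        simp only [hqdef]
        exact le_max_right _ _
    have h5 : 2 ≤ closedCount P q := by
      unfold closedCount
      calc 2 = ({a, b} : Finset (Fin n)).card := (Finset.card_pair hab).symm
        _ ≤ _ := Finset.card_le_card hsub
    exact_mod_cast h5
  have hl := hloc q hqmem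
  have hcd : closedDisc P q < 1/(n:ℝ) := lt_of_le_of_lt (le_max_right _ _) hl
  unfold closedDisc at hcd
  have h6 : (∏ j, q j) ≤ 1/(n:ℝ) := le_trans hprodle hpow
  have h7 : (2:ℝ)/(n:ℝ) ≤ (closedCount P q : ℝ)/(n:ℝ) := (div_le_div_iff_of_pos_right hnR).mpr hcc
  have h8 : (2:ℝ)/(n:ℝ) = 1/(n:ℝ) + 1/(n:ℝ) := by ring
  linarith
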